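/- arXiv:1608.06061 — 5 statements merged into one kernel-verified Lean document; each statement's English description precedes it below -/
import Mathlib

section
/- For every α ∈ ℕ one has 1 + ∑_{k=1}^{∞} k^{−1/6} r_α(k) ≤ e + 6 / α^{1/6}. -/
open MeasureTheory Real Filter

noncomputable section

/-- The `k`-th normalized probabilists' Hermite polynomial evaluated at `x`:
`H_k(x) = He_k(x) / √(k!)` where `He_k` is the (monic) probabilists' Hermite polynomial,
i.e. `H_k(x) = ((-1)^k/√(k!)) e^{x²/2} (d^k/dx^k) e^{-x²/2}`. -/
noncomputable def hermiteN (k : ℕ) (x : ℝ) : ℝ :=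
  ((Polynomial.hermite k).map (Int.castRingHom ℝ)).eval x / Real.sqrt (Nat.factorial k)

/-- Multivariate normalized Hermite polynomial `H_k(x) = ∏_j H_{k_j}(x_j)`. -/
noncomputable def hermiteMulti {s : ℕ} (k : Fin s → ℕ) (x : Fin s → ℝ) : ℝ :=
  ∏ j, hermiteN (k j) (x j)

/-- The `s`-dimensional standard Gaussian density `φ_s(x) = (2π)^{-s/2} exp(-x·x/2)`. -/
noncomputable def gaussDensity (s : ℕ) (x : Fin s → ℝ) : ℝ :=
  (2 * π) ^ (-(s : ℝ) / 2) * Real.exp (-(∑ j, x j ^ 2) / 2)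

/-- Partial derivative of `f : ℝ^s → ℝ` in coordinate `j`. -/
noncomputable def pDeriv {s : ℕ} (j : Fin s) (f : (Fin s → ℝ) → ℝ) : (Fin s → ℝ) → ℝ :=
  fun x => deriv (fun t => f (Function.update x j t)) (x j)

/-- Mixed partial derivative `∂^τ f = ∂^{τ_1}_{x_1} ⋯ ∂^{τ_s}_{x_s} f`. -/
noncomputable def mDeriv {s : ℕ} (τ : Fin s → ℕ) (f : (Fin s → ℝ) → ℝ) : (Fin s → ℝ) → ℝ :=
  (List.finRange s).foldr (fun j g => (pDeriv j)^[τ j] g) f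

/-- `f` possesses continuous mixed partial derivatives `∂^τ f` for all `τ ∈ {0,…,α}^s`:
each such mixed partial is continuous and, as long as the order in coordinate `j` is
below `α`, one further partial derivative in coordinate `j` exists. -/
def HasContMixedPartials (s α : ℕ) (f : (Fin s → ℝ) → ℝ) : Prop :=
  ∀ τ : Fin s → ℕ, (∀ j, τ j ≤ α) →
    Continuous (mDeriv τ f) ∧
    ∀ (j : Fin s) (x : Fin s → ℝ), τ j < α →
      DifferentiableAt ℝ (fun t => mDeriv τ f (Function.update x j t)) (x j)

/-- The squared Hermite-space (Sobolev–Gauss) norm of smoothness `α`: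
`‖f‖²_{s,α} = ∑_{τ ∈ {0,…,α}^s} ∫_{ℝ^s} (∂^τ f)² φ_s dx`. -/
noncomputable def hermiteNormSq (s α : ℕ) (f : (Fin s → ℝ) → ℝ) : ℝ :=
  ∑ τ : Fin s → Fin (α + 1),
    ∫ x : Fin s → ℝ, (mDeriv (fun j => (τ j : ℕ)) f x) ^ 2 * gaussDensity s x

/-- All the integrals appearing in `‖f‖²_{s,α}` are finite. -/
def HermiteNormFinite (s α : ℕ) (f : (Fin s → ℝ) → ℝ) : Prop :=
  ∀ τ : Fin s → ℕ, (∀ j, τ j ≤ α) →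
    Integrable (fun x : Fin s → ℝ => (mDeriv τ f x) ^ 2 * gaussDensity s x)

/-- The unit cube `[0,1]^s`. -/
def unitCube (s : ℕ) : Set (Fin s → ℝ) := Set.univ.pi fun _ => Set.Icc (0 : ℝ) 1

/-- The squared ANOVA (unanchored Sobolev) norm of smoothness `α` on the unit cube.
A pair `(u, τ_u)` with `u ⊆ {1,…,s}` and `τ_u ∈ {0,…,α-1}^{|u|}` corresponds bijectively to
`τ ∈ {0,…,α}^s` via `u = {j : τ_j < α}`; the inner integration over `z_u` and outer
integration over `z_{-u}` are realized as integrals over the (volume-one) unit cube. -/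
noncomputable def sobNormSq (s α : ℕ) (g : (Fin s → ℝ) → ℝ) : ℝ :=
  ∑ τ : Fin s → Fin (α + 1),
    ∫ y in unitCube s,
      (∫ w in unitCube s,
        mDeriv (fun j => (τ j : ℕ)) g (fun j => if (τ j : ℕ) < α then w j else y j)) ^ 2

/-- `r_α(k)`: `r_α(0) = 1` and `r_α(k) = (∑_{τ=0}^{α} β_τ(k))⁻¹` for `k ≥ 1`, where
`β_τ(k) = k!/(k-τ)!` for `k ≥ τ` and `0` otherwise (the descending factorial). -/
noncomputable def rcoef (α k : ℕ) : ℝ :=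
  if k = 0 then 1 else (∑ τ ∈ Finset.range (α + 1), (Nat.descFactorial k τ : ℝ))⁻¹

/-- `r_{s,α}(k) = ∏_j r_α(k_j)`. -/
noncomputable def rcoefMulti (s α : ℕ) (k : Fin s → ℕ) : ℝ := ∏ j, rcoef α (k j)

/-- Scaled shift `B_b : z ↦ 2bz - (b,…,b)` mapping `[0,1]^s` onto `[-b,b]^s`. -/
def mapB (s : ℕ) (b : ℝ) (z : Fin s → ℝ) : Fin s → ℝ := fun j => 2 * b * z j - b

/-- `h` is the `τ`-th weak mixed partial derivative of `f`. -/
def IsWeakMixedDeriv (s : ℕ) (τ : Fin s → ℕ) (f h : (Fin s → ℝ) → ℝ) : Prop :=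
  ∀ ρ : (Fin s → ℝ) → ℝ, ContDiff ℝ (⊤ : ℕ∞) ρ → HasCompactSupport ρ →
    ∫ x, f x * mDeriv τ ρ x = (-1 : ℝ) ^ (∑ i, τ i) * ∫ x, h x * ρ x

end
open Topology

lemma rcoef_aux_nonneg (α k : ℕ) : 0 ≤ (if k = 0 then (1:ℝ) else (∑ τ ∈ Finset.range (α + 1), (Nat.descFactorial k τ : ℝ))⁻¹) := by
  split
  · norm_num
  · positivity

lemma key_ineq (a : ℝ) (ha : 1 ≤ a) :
    ((a+1) ^ ((1:ℝ)/6))⁻¹ * (a+1)⁻¹ ≤ 6 * ((a ^ ((1:ℝ)/6))⁻¹ - ((a+1) ^ ((1:ℝ)/6))⁻¹) := by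
  have ha0 : (0:ℝ) < a := lt_of_lt_of_le one_pos ha
  have hb0 : (0:ℝ) < a + 1 := by linarith
  set u : ℝ := (a ^ ((1:ℝ)/6))⁻¹ with hu
  set v : ℝ := ((a+1) ^ ((1:ℝ)/6))⁻¹ with hv
  have hru : (0:ℝ) < a ^ ((1:ℝ)/6) := Real.rpow_pos_of_pos ha0 _
  have hrv : (0:ℝ) < (a+1) ^ ((1:ℝ)/6) := Real.rpow_pos_of_pos hb0 _
  have hu0 : 0 < u := inv_pos.2 hru
  have hv0 : 0 < v := inv_pos.2 hrv
  have hvu : v ≤ u := by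
    apply inv_anti₀ hru
    exact Real.rpow_le_rpow ha0.le (by linarith) (by norm_num)
  have hu6 : u ^ 6 = a⁻¹ := by
    rw [hu, inv_pow, ← Real.rpow_natCast (a ^ ((1:ℝ)/6)) 6, ← Real.rpow_mul ha0.le]
    norm_num
  have hv6 : v ^ 6 = (a+1)⁻¹ := by
    rw [hv, inv_pow, ← Real.rpow_natCast ((a+1) ^ ((1:ℝ)/6)) 6, ← Real.rpow_mul hb0.le]
    norm_num
  have heq : u ^ 6 - v ^ 6 = u ^ 6 * v ^ 6 := by
    rw [hu6, hv6]
    field_simp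
    ring
  -- goal: v * v^6 ≤ 6 * (u - v)
  have goal' : v * v ^ 6 ≤ 6 * (u - v) := by
    set S : ℝ := u^5 + u^4*v + u^3*v^2 + u^2*v^3 + u*v^4 + v^5 with hS
    have hfac : (u - v) * S = u ^ 6 * v ^ 6 := by
      rw [← heq]; ring
    have hSle : S ≤ 6 * u^5 := by nlinarith [hu0.le, hv0.le, hvu, pow_nonneg hu0.le 3, pow_nonneg hu0.le 4, pow_nonneg hv0.le 2, pow_nonneg hv0.le 3, pow_nonneg hv0.le 4, pow_le_pow_left₀ hv0.le hvu 5, pow_le_pow_left₀ hv0.le hvu 4, pow_le_pow_left₀ hv0.le hvu 3, pow_le_pow_left₀ hv0.le hvu 2, mul_nonneg (pow_nonneg hu0.le 4) hv0.le]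
    have huv0 : 0 ≤ u - v := sub_nonneg.2 hvu
    have h1 : u ^ 6 * v ^ 6 ≤ (u - v) * (6 * u ^ 5) := by
      rw [← hfac]
      exact mul_le_mul_of_nonneg_left hSle huv0
    have hup : (0:ℝ) < u ^ 5 := pow_pos hu0 5
    have h2 : v * v ^ 6 * u ^ 5 ≤ 6 * (u - v) * u ^ 5 := by
      have h3 : v * v ^ 6 * u ^ 5 ≤ u * v ^ 6 * u ^ 5 := by
        have h := mul_le_mul_of_nonneg_right hvu (show (0:ℝ) ≤ v ^ 6 * u ^ 5 by positivity)
        calc v * v ^ 6 * u ^ 5 = v * (v ^ 6 * u ^ 5) := by ring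
          _ ≤ u * (v ^ 6 * u ^ 5) := h
          _ = u * v ^ 6 * u ^ 5 := by ring
      have h4 : u * v ^ 6 * u ^ 5 = u ^ 6 * v ^ 6 := by ring
      nlinarith
    exact le_of_mul_le_mul_right h2 hup
  calc v * (a+1)⁻¹ = v * v ^ 6 := by rw [hv6]
    _ ≤ 6 * (u - v) := goal'

lemma sum_inv_succ_factorial_le (m : ℕ) :
    ∑ i ∈ Finset.range m, ((Nat.factorial (i+1) : ℝ))⁻¹ ≤ Real.exp 1 - 1 := by
  have h : HasSum (fun n : ℕ => ((Nat.factorial n : ℝ))⁻¹) (Real.exp 1) := by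
    have := NormedSpace.exp_series_hasSum_exp' (𝕂 := ℝ) (1 : ℝ)
    simpa [Real.exp_eq_exp_ℝ] using this
  have hle : ∑ i ∈ Finset.range (m+1), ((Nat.factorial i : ℝ))⁻¹ ≤ Real.exp 1 :=
    sum_le_hasSum _ (fun i _ => by positivity) h
  rw [Finset.sum_range_succ'] at hle
  simp only [Nat.factorial_zero, Nat.cast_one, inv_one] at hle
  linarith

lemma rcoef_nonneg (α k : ℕ) : 0 ≤ rcoef α k := by
  unfold rcoef; split
  · norm_num
  · positivity

lemma rcoef_le (α k : ℕ) (hα : 0 < α) (hk : k ≠ 0) : rcoef α k ≤ ((k : ℝ) + 1)⁻¹ := by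
  unfold rcoef
  rw [if_neg hk]
  have hsub : Finset.range 2 ⊆ Finset.range (α + 1) := Finset.range_subset_range.2 (by omega)
  have hge : ((k : ℝ) + 1) ≤ ∑ τ ∈ Finset.range (α + 1), (Nat.descFactorial k τ : ℝ) := by
    have h2 : ∑ τ ∈ Finset.range 2, (Nat.descFactorial k τ : ℝ) = (k : ℝ) + 1 := by
      simp [Finset.sum_range_succ]
      ring
    calc ((k : ℝ) + 1) = ∑ τ ∈ Finset.range 2, (Nat.descFactorial k τ : ℝ) := h2.symm
      _ ≤ _ := Finset.sum_le_sum_of_subset_of_nonneg hsub (fun i _ _ => by positivity)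
  exact inv_anti₀ (by positivity) hge

lemma rcoef_le_factorial (α k : ℕ) (hk : k ≠ 0) (hkα : k ≤ α) :
    rcoef α k ≤ ((Nat.factorial k : ℝ))⁻¹ := by
  unfold rcoef
  rw [if_neg hk]
  have hmem : k ∈ Finset.range (α + 1) := Finset.mem_range.2 (by omega)
  have hge : (Nat.factorial k : ℝ) ≤ ∑ τ ∈ Finset.range (α + 1), (Nat.descFactorial k τ : ℝ) := by
    have := Finset.single_le_sum (f := fun τ => (Nat.descFactorial k τ : ℝ))
      (fun i _ => by positivity) hmem
    simpa [Nat.descFactorial_self] using this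
  exact inv_anti₀ (by positivity) hge


/-- For every `α ∈ ℕ`, `1 + ∑_{k=1}^∞ k^{-1/6} r_α(k) ≤ e + 6/α^{1/6}`. -/
theorem one_add_tsum_rcoef_le (α : ℕ) (hα : 0 < α) :
    1 + ∑' k : ℕ, ((k + 1 : ℝ) ^ ((1 : ℝ) / 6))⁻¹ * rcoef α (k + 1) ≤
      Real.exp 1 + 6 / (α : ℝ) ^ ((1 : ℝ) / 6) := by
  set a : ℕ → ℝ := fun k => ((k + 1 : ℝ) ^ ((1 : ℝ) / 6))⁻¹ * rcoef α (k + 1) with ha_def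
  have h_nonneg : ∀ n, 0 ≤ a n := fun n => mul_nonneg (by positivity) (rcoef_nonneg α (n + 1))
  have h_le : ∀ n, a n ≤ ((n : ℝ) + 1) ^ (-(7 : ℝ) / 6) := by
    intro n
    have hp : (0 : ℝ) < (n : ℝ) + 1 := by positivity
    have h1 : rcoef α (n + 1) ≤ ((n : ℝ) + 1 + 1)⁻¹ := by
      have := rcoef_le α (n + 1) hα (Nat.succ_ne_zero n)
      push_cast at this
      linarith
    have h2 : ((n : ℝ) + 1 + 1)⁻¹ ≤ ((n : ℝ) + 1)⁻¹ := by
      apply inv_anti₀ hp; linarith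
    calc a n ≤ (((n : ℝ) + 1) ^ ((1 : ℝ) / 6))⁻¹ * ((n : ℝ) + 1)⁻¹ :=
          mul_le_mul_of_nonneg_left (h1.trans h2) (by positivity)
      _ = ((n : ℝ) + 1) ^ (-(7 : ℝ) / 6) := by
          rw [← Real.rpow_neg hp.le, ← Real.rpow_neg_one ((n : ℝ) + 1),
            ← Real.rpow_add hp]
          norm_num
  have hsum_b : Summable (fun n : ℕ => ((n : ℝ) + 1) ^ (-(7 : ℝ) / 6)) := by
    have h := Real.summable_nat_rpow (p := -(7 : ℝ) / 6) |>.2 (by norm_num)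
    have h' := (summable_nat_add_iff 1).2 h
    refine h'.congr fun n => ?_
    push_cast
    norm_num
  have hA : Summable a := Summable.of_nonneg_of_le h_nonneg h_le hsum_b
  rw [← Summable.sum_add_tsum_nat_add α hA]
  -- part 1
  have hpart1 : ∑ i ∈ Finset.range α, a i ≤ Real.exp 1 - 1 := by
    refine le_trans (Finset.sum_le_sum ?_) (sum_inv_succ_factorial_le α)
    intro i hi
    have hiα : i + 1 ≤ α := Finset.mem_range.1 hi
    have h1 : rcoef α (i + 1) ≤ ((Nat.factorial (i + 1) : ℝ))⁻¹ :=
      rcoef_le_factorial α (i + 1) (Nat.succ_ne_zero i) hiα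
    have h2 : (((i : ℝ) + 1) ^ ((1 : ℝ) / 6))⁻¹ ≤ 1 := by
      rw [inv_le_one_iff₀]
      right
      exact Real.one_le_rpow (by linarith [Nat.cast_nonneg (α := ℝ) i]) (by norm_num)
    calc a i ≤ 1 * ((Nat.factorial (i + 1) : ℝ))⁻¹ :=
          mul_le_mul h2 h1 (rcoef_nonneg α (i + 1)) (by norm_num)
      _ = ((Nat.factorial (i + 1) : ℝ))⁻¹ := one_mul _
  -- part 2
  set g : ℕ → ℝ := fun n => (((n : ℝ) + α) ^ ((1 : ℝ) / 6))⁻¹ with hg_def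
  have hαR : (1 : ℝ) ≤ (α : ℝ) := by exact_mod_cast hα
  have hx_pos : ∀ n : ℕ, (0 : ℝ) < (n : ℝ) + α := fun n => by
    have := Nat.cast_nonneg (α := ℝ) n; linarith
  have hg_anti : ∀ n, g (n + 1) ≤ g n := by
    intro n
    apply inv_anti₀ (Real.rpow_pos_of_pos (hx_pos n) _)
    apply Real.rpow_le_rpow (hx_pos n).le _ (by norm_num)
    push_cast
    linarith
  have hg0 : Tendsto g atTop (𝓝 0) := by
    apply Filter.Tendsto.inv_tendsto_atTop
    apply (tendsto_rpow_atTop (by norm_num : (0:ℝ) < 1/6)).comp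
    apply tendsto_atTop_add_const_right
    exact tendsto_natCast_atTop_atTop
  have htele : HasSum (fun n => g n - g (n + 1)) (g 0) := by
    rw [hasSum_iff_tendsto_nat_of_nonneg (fun i => sub_nonneg.2 (hg_anti i))]
    simp only [Finset.sum_range_sub']
    simpa using tendsto_const_nhds.sub hg0
  have hterm : ∀ n : ℕ, a (n + α) ≤ 6 * (g n - g (n + 1)) := by
    intro n
    set x : ℝ := (n : ℝ) + α with hx_def
    have hx1 : (1 : ℝ) ≤ x := by
      have := Nat.cast_nonneg (α := ℝ) n; rw [hx_def]; linarith
    have hkey := key_ineq x hx1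
    have e1 : a (n + α) = ((x + 1) ^ ((1 : ℝ) / 6))⁻¹ * rcoef α (n + α + 1) := by
      rw [ha_def, hx_def]
      push_cast
      ring_nf
    have h1 : rcoef α (n + α + 1) ≤ ((x + 1) + 1)⁻¹ := by
      have := rcoef_le α (n + α + 1) hα (by omega)
      push_cast at this
      rw [hx_def]
      convert this using 2 <;> push_cast <;> ring
    have h2 : ((x + 1) + 1)⁻¹ ≤ (x + 1)⁻¹ := by
      apply inv_anti₀ (by linarith); linarith
    have e2 : g (n + 1) = ((x + 1) ^ ((1 : ℝ) / 6))⁻¹ := by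
      rw [hg_def, hx_def]
      push_cast
      ring_nf
    have e3 : g n = (x ^ ((1 : ℝ) / 6))⁻¹ := by rw [hg_def, hx_def]
    rw [e1, e2, e3]
    calc ((x + 1) ^ ((1 : ℝ) / 6))⁻¹ * rcoef α (n + α + 1)
        ≤ ((x + 1) ^ ((1 : ℝ) / 6))⁻¹ * (x + 1)⁻¹ :=
          mul_le_mul_of_nonneg_left (h1.trans h2) (by positivity)
      _ ≤ 6 * ((x ^ ((1 : ℝ) / 6))⁻¹ - ((x + 1) ^ ((1 : ℝ) / 6))⁻¹) := hkey
  have hA' : Summable (fun n => a (n + α)) := (summable_nat_add_iff α).2 hA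
  have hpart2 : ∑' n, a (n + α) ≤ 6 * g 0 := by
    calc ∑' n, a (n + α) ≤ ∑' n, 6 * (g n - g (n + 1)) :=
          Summable.tsum_le_tsum hterm hA' (htele.mul_left 6).summable
      _ = 6 * g 0 := (htele.mul_left 6).tsum_eq
  have hg0val : (6 : ℝ) * g 0 = 6 / (α : ℝ) ^ ((1 : ℝ) / 6) := by
    rw [hg_def]
    simp [div_eq_mul_inv]
  linarith
end

section
/- Let s, α ∈ ℕ and let f : ℝ^s → ℝ have continuous mixed partial derivatives ∂^j f for all multiindices j ∈ {0,…,α}^s. Then for every τ ∈ {0,…,α}^s and every x ∈ ℝ^s, ∂^τ (f · φ_s)(x) = φ_s(x) · ∑_{j ≤ τ} (−1)^{|τ−j|} C(τ, τ−j) √((τ−j)!) · H_{τ−j}(x) · ∂^j f(x), where the sum is over multiindices j ∈ ℕ_0^s with j_i ≤ τ_i for all i, C(τ, τ−j) = ∏_i C(τ_i, τ_i−j_i) is the product of binomial coefficients, (τ−j)! = ∏_i (τ_i−j_i)!, and |τ−j| = ∑_i (τ_i − j_i). -/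
open MeasureTheory Real Filter

/-! ### auxiliary lemmas -/

section Aux

open Finset

/-- general Leibniz rule for iterated derivatives of chains. -/
lemma leibniz_chain (u v : ℕ → ℝ → ℝ) :
    ∀ n, (∀ m, m < n → ∀ t, HasDerivAt (u m) (u (m+1) t) t) →
      (∀ m, m < n → ∀ t, HasDerivAt (v m) (v (m+1) t) t) →
      ∀ t, deriv^[n] (fun r => u 0 r * v 0 r) t =
        ∑ m ∈ Finset.range (n+1), (n.choose m : ℝ) * (u (n-m) t * v m t)
  | 0, _, _, t => by simp
  | (n+1), hu, hv, t => by
    rw [Function.iterate_succ_apply']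
    have hIH := funext (leibniz_chain u v n (fun m hm => hu m (hm.trans (Nat.lt_succ_self n)))
      (fun m hm => hv m (hm.trans (Nat.lt_succ_self n))))
    rw [hIH]
    have hD : HasDerivAt (fun r => ∑ m ∈ Finset.range (n+1), (n.choose m : ℝ) * (u (n-m) r * v m r))
        (∑ m ∈ Finset.range (n+1), (n.choose m : ℝ) *
          (u (n-m+1) t * v m t + u (n-m) t * v (m+1) t)) t := by
      refine HasDerivAt.fun_sum fun m hm => ?_
      have hm' : m < n + 1 := Finset.mem_range.mp hm
      have h1 : n - m < n + 1 := Nat.lt_succ_of_le (Nat.sub_le n m)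
      exact ((hu (n-m) h1 t).mul (hv m hm' t)).const_mul _
    rw [hD.deriv]
    -- algebra
    have key : ∀ m ∈ Finset.range (n+1), (n.choose m : ℝ) *
          (u (n-m+1) t * v m t + u (n-m) t * v (m+1) t)
        = (n.choose m : ℝ) * (u (n+1-m) t * v m t) + (n.choose m : ℝ) * (u (n-m) t * v (m+1) t) := by
      intro m hm
      have : n - m + 1 = n + 1 - m := by
        have := Finset.mem_range.mp hm; omega
      rw [this]; ring
    rw [Finset.sum_congr rfl key, Finset.sum_add_distrib]
    -- target
    rw [Finset.sum_range_succ' (fun m => ((n+1).choose m : ℝ) * (u (n+1-m) t * v m t)) (n+1)]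
    have key2 : ∀ m ∈ Finset.range (n+1), ((n+1).choose (m+1) : ℝ) * (u (n+1-(m+1)) t * v (m+1) t)
        = (n.choose m : ℝ) * (u (n-m) t * v (m+1) t)
          + (n.choose (m+1) : ℝ) * (u (n-m) t * v (m+1) t) := by
      intro m hm
      have h1 : n + 1 - (m + 1) = n - m := by omega
      rw [h1, Nat.choose_succ_succ, Nat.cast_add]; ring
    rw [Finset.sum_congr rfl key2, Finset.sum_add_distrib]
    have key3 : ∑ m ∈ Finset.range (n+1), (n.choose m : ℝ) * (u (n+1-m) t * v m t)
        = (∑ m ∈ Finset.range (n+1), (n.choose (m+1) : ℝ) * (u (n-m) t * v (m+1) t))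
          + ((n+1).choose 0 : ℝ) * (u (n+1-0) t * v 0 t) := by
      rw [Finset.sum_range_succ (fun m => (n.choose (m+1) : ℝ) * (u (n-m) t * v (m+1) t)) n]
      rw [Nat.choose_succ_self, Nat.cast_zero, zero_mul, add_zero]
      rw [Finset.sum_range_succ' (fun m => (n.choose m : ℝ) * (u (n+1-m) t * v m t)) n]
      simp only [Nat.choose_zero_right, Nat.cast_one, Nat.sub_zero]
      congr 1
      refine Finset.sum_congr rfl fun m hm => ?_
      have : n + 1 - (m + 1) = n - m := by omega
      rw [this]
    rw [key3]; ring

lemma pDeriv_iterate {s : ℕ} (i : Fin s) (n : ℕ) :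
    ∀ (h : (Fin s → ℝ) → ℝ) (x : Fin s → ℝ),
      (pDeriv i)^[n] h x = deriv^[n] (fun t => h (Function.update x i t)) (x i) := by
  induction n with
  | zero => intro h x; simp
  | succ n ih =>
    intro h x
    rw [Function.iterate_succ_apply, ih (pDeriv i h) x]
    have : (fun t => pDeriv i h (Function.update x i t))
        = deriv (fun t => h (Function.update x i t)) := by
      funext t
      simp only [pDeriv, Function.update_idem, Function.update_self]
    rw [this, ← Function.iterate_succ_apply]

lemma foldr_eq_self {s : ℕ} (τ : Fin s → ℕ) (g : (Fin s → ℝ) → ℝ) :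
    ∀ (l : List (Fin s)), (∀ j ∈ l, τ j = 0) →
      l.foldr (fun j g => (pDeriv j)^[τ j] g) g = g := by
  intro l
  induction l with
  | nil => intro; rfl
  | cons a l ih =>
    intro h
    simp only [List.foldr_cons, ih (fun j hj => h j (List.mem_cons_of_mem a hj)),
      h a (List.mem_cons_self), Function.iterate_zero_apply]

lemma foldr_congr {s : ℕ} (τ σ : Fin s → ℕ) (g : (Fin s → ℝ) → ℝ) :
    ∀ (l : List (Fin s)), (∀ j ∈ l, τ j = σ j) →
      l.foldr (fun j g => (pDeriv j)^[τ j] g) g = l.foldr (fun j g => (pDeriv j)^[σ j] g) g := by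
  intro l
  induction l with
  | nil => intro; rfl
  | cons a l ih =>
    intro h
    simp only [List.foldr_cons, ih (fun j hj => h j (List.mem_cons_of_mem a hj)),
      h a (List.mem_cons_self)]

lemma mDeriv_split {s : ℕ} (τ : Fin s → ℕ) (g : (Fin s → ℝ) → ℝ) (i : Fin s)
    (h0 : ∀ k, k < i → τ k = 0) :
    mDeriv τ g = (pDeriv i)^[τ i] (mDeriv (Function.update τ i 0) g) := by
  classical
  obtain ⟨l₁, l₂, hsplit, htake, hdrop⟩ :
      ∃ l₁ l₂ : List (Fin s), List.finRange s = l₁ ++ i :: l₂ ∧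
        (∀ k ∈ l₁, k < i) ∧ (∀ k ∈ l₂, i < k) := by
    have hi : (i : ℕ) < (List.finRange s).length := by simp [i.isLt]
    have hsplit : List.finRange s
        = (List.finRange s).take i ++ i :: (List.finRange s).drop (i+1) := by
      conv_lhs => rw [← List.take_append_drop (i : ℕ) (List.finRange s)]
      congr 1
      rw [List.drop_eq_getElem_cons hi]
      simp
    have hpw := List.pairwise_lt_finRange s
    rw [hsplit, List.pairwise_append] at hpw
    exact ⟨_, _, hsplit, fun k hk => hpw.2.2 k hk i (List.mem_cons_self),
      fun k hk => (List.pairwise_cons.mp hpw.2.1).1 k hk⟩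
  set σ := Function.update τ i 0 with hσ
  have hτ : mDeriv τ g = (pDeriv i)^[τ i]
      (l₂.foldr (fun j g => (pDeriv j)^[τ j] g) g) := by
    rw [mDeriv, hsplit, List.foldr_append]
    rw [foldr_eq_self τ _ _ (fun k hk => h0 k (htake k hk)), List.foldr_cons]
  have hσg : mDeriv σ g = l₂.foldr (fun j g => (pDeriv j)^[τ j] g) g := by
    rw [mDeriv, hsplit, List.foldr_append]
    rw [foldr_eq_self σ _ _ (fun k hk => ?_)]
    · rw [List.foldr_cons]
      have hσi : σ i = 0 := Function.update_self i 0 τ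
      rw [hσi, Function.iterate_zero_apply]
      exact (foldr_congr σ τ g _ (fun j hj => by
        rw [hσ, Function.update_of_ne (ne_of_gt (hdrop j hj)) 0 τ]))
    · rw [hσ, Function.update_of_ne (ne_of_lt (htake k hk)) 0 τ]
      exact h0 k (htake k hk)
  rw [hτ, hσg]

lemma hermiteN_zero (y : ℝ) : hermiteN 0 y = 1 := by
  simp [hermiteN, Polynomial.hermite_zero]

lemma aeval_eq_eval_map (m : ℕ) (y : ℝ) :
    Polynomial.aeval y (Polynomial.hermite m)
      = ((Polynomial.hermite m).map (Int.castRingHom ℝ)).eval y := by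
  rw [Polynomial.aeval_def, Polynomial.eval_map, algebraMap_int_eq]

lemma sqrt_fact_mul_hermiteN (m : ℕ) (y : ℝ) :
    Real.sqrt (Nat.factorial m) * hermiteN m y
      = Polynomial.aeval y (Polynomial.hermite m) := by
  rw [hermiteN, aeval_eq_eval_map]
  have h : Real.sqrt (Nat.factorial m) ≠ 0 := by
    positivity -- factorial pos?
  field_simp

lemma gauss_factor (s : ℕ) (y : Fin s → ℝ) :
    gaussDensity s y = (2 * π) ^ (-(s : ℝ) / 2) * ∏ k, Real.exp (-(y k ^ 2 / 2)) := by
  rw [gaussDensity, ← Real.exp_sum]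
  have h : (-(∑ j, y j ^ 2)) / 2 = ∑ k : Fin s, -(y k ^ 2 / 2) := by
    rw [neg_div, Finset.sum_div, ← Finset.sum_neg_distrib]
  rw [h]

lemma sqrt_finset_prod {ι : Type*} (S : Finset ι) (g : ι → ℝ) (hg : ∀ i ∈ S, 0 ≤ g i) :
    Real.sqrt (∏ i ∈ S, g i) = ∏ i ∈ S, Real.sqrt (g i) := by
  classical
  induction S using Finset.induction with
  | empty => simp
  | @insert a S' hnot ih =>
    rw [Finset.prod_insert hnot, Finset.prod_insert hnot,
      Real.sqrt_mul (hg a (Finset.mem_insert_self a S')),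
      ih (fun i hi => hg i (Finset.mem_insert_of_mem hi))]

lemma hasDerivAt_iterE (m : ℕ) (t : ℝ) :
    HasDerivAt (deriv^[m] (fun y => Real.exp (-(y ^ 2 / 2))))
      (deriv^[m+1] (fun y => Real.exp (-(y ^ 2 / 2))) t) t := by
  have hE : ContDiff ℝ (⊤ : ℕ∞) (fun y : ℝ => Real.exp (-(y ^ 2 / 2))) := by
    apply Real.contDiff_exp.comp
    exact ((contDiff_id.pow 2).div_const 2).neg
  have h1 : ContDiff ℝ (⊤ : ℕ∞) (deriv^[m] (fun y : ℝ => Real.exp (-(y ^ 2 / 2)))) :=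
    ContDiff.iterate_deriv m hE
  have h2 := (h1.differentiable (by simp)).differentiableAt (x := t)
  rw [Function.iterate_succ_apply']
  exact h2.hasDerivAt


lemma mDeriv_zero {s : ℕ} (τ : Fin s → ℕ) (g : (Fin s → ℝ) → ℝ) (h : ∀ i, τ i = 0) :
    mDeriv τ g = g :=
  foldr_eq_self τ g _ (fun j _ => h j)

lemma update_zero_self {s : ℕ} (j : Fin s → ℕ) (i : Fin s) (h : j i = 0) :
    Function.update j i 0 = j := by
  funext k
  rcases eq_or_ne k i with rfl | hk
  · rw [Function.update_self, h]
  · rw [Function.update_of_ne hk]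

lemma mDeriv_update_succ {s : ℕ} (f : (Fin s → ℝ) → ℝ) (i : Fin s) (j : Fin s → ℕ)
    (hj0 : ∀ k, k < i → j k = 0) (hji : j i = 0) (m : ℕ) :
    mDeriv (Function.update j i (m+1)) f = pDeriv i (mDeriv (Function.update j i m) f) := by
  have h1 : ∀ (a : ℕ), mDeriv (Function.update j i a) f = (pDeriv i)^[a] (mDeriv j f) := by
    intro a
    rw [mDeriv_split (Function.update j i a) f i (fun k hk => by
      rw [Function.update_of_ne (ne_of_lt hk)]; exact hj0 k hk)]
    rw [Function.update_self, Function.update_idem, update_zero_self j i hji]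
  rw [h1, h1, Function.iterate_succ_apply']

/-- the derivative chain in coordinate `i`. -/
lemma hasDerivAt_chain {s α : ℕ} (f : (Fin s → ℝ) → ℝ) (hf : HasContMixedPartials s α f)
    (i : Fin s) (j : Fin s → ℕ) (hj0 : ∀ k, k < i → j k = 0) (hji : j i = 0)
    (hjα : ∀ k, j k ≤ α) (x : Fin s → ℝ) (m : ℕ) (hm : m < α) (t : ℝ) :
    HasDerivAt (fun t => mDeriv (Function.update j i m) f (Function.update x i t))
      (mDeriv (Function.update j i (m+1)) f (Function.update x i t)) t := by
  have hτα : ∀ k, Function.update j i m k ≤ α := by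
    intro k
    rcases eq_or_ne k i with rfl | hk
    · rw [Function.update_self]; exact hm.le
    · rw [Function.update_of_ne hk]; exact hjα k
  have hd := (hf (Function.update j i m) hτα).2 i (Function.update x i t) (by
    rw [Function.update_self]; exact hm)
  simp only [Function.update_idem, Function.update_self] at hd
  have := hd.hasDerivAt
  refine this.congr_deriv ?_
  rw [mDeriv_update_succ f i j hj0 hji m]
  simp only [pDeriv, Function.update_idem, Function.update_self]


open Finset in
lemma main_list {s α : ℕ} (f : (Fin s → ℝ) → ℝ) (hf : HasContMixedPartials s α f) :
    ∀ (l : List (Fin s)), l.Pairwise (· < ·) →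
      ∀ (τ : Fin s → ℕ), (∀ i, τ i ≤ α) → (∀ i, i ∉ l → τ i = 0) →
      ∀ x : Fin s → ℝ,
      mDeriv τ (fun y => f y * gaussDensity s y) x =
        gaussDensity s x *
          ∑ j ∈ Fintype.piFinset fun i => Finset.range (τ i + 1),
            (-1 : ℝ) ^ (∑ i, (τ i - j i)) *
              (∏ i, ((τ i).choose (τ i - j i) : ℝ)) *
              Real.sqrt (∏ i, ((τ i - j i).factorial : ℝ)) *
              hermiteMulti (fun i => τ i - j i) x * mDeriv j f x := by
  intro l
  induction l with
  | nil =>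
    intro _ τ hτα hsupp x
    have hτ0 : ∀ i, τ i = 0 := fun i => hsupp i (List.not_mem_nil)
    rw [mDeriv_zero τ _ hτ0]
    rw [Finset.sum_eq_single_of_mem (fun _ => 0)
      (by
        rw [Fintype.mem_piFinset]
        intro i
        simp)
      (by
        intro j hj hne
        exact absurd (funext fun i => by
          have := Fintype.mem_piFinset.mp hj i
          rw [hτ0 i] at this
          simpa using this) hne)]
    simp only [hτ0, Nat.sub_zero, Finset.sum_const_zero, pow_zero, Nat.choose_self,
      Nat.cast_one, Finset.prod_const_one, Nat.factorial_zero, Real.sqrt_one]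
    rw [mDeriv_zero (fun _ => 0) f (fun _ => rfl)]
    have : hermiteMulti (fun i : Fin s => 0 - (0:ℕ)) x = 1 := by
      rw [hermiteMulti]
      exact Finset.prod_eq_one fun k _ => hermiteN_zero (x k)
    rw [this]
    ring
  | cons i l' ih =>
    intro hsort τ hτα hsupp x
    classical
    have hsort' : l'.Pairwise (· < ·) := hsort.of_cons
    have hilt : ∀ k ∈ l', i < k := fun k hk => List.rel_of_pairwise_cons hsort hk
    set n := τ i with hn
    set σ := Function.update τ i 0 with hσ
    have hσi : σ i = 0 := Function.update_self i 0 τ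
    have hσk : ∀ k, k ≠ i → σ k = τ k := fun k hk => Function.update_of_ne hk 0 τ
    have hσα : ∀ k, σ k ≤ α := by
      intro k
      rcases eq_or_ne k i with rfl | hk
      · rw [hσi]; exact Nat.zero_le α
      · rw [hσk k hk]; exact hτα k
    have hσsupp : ∀ k, k ∉ l' → σ k = 0 := by
      intro k hk
      rcases eq_or_ne k i with rfl | hki
      · exact hσi
      · rw [hσk k hki]
        exact hsupp k (by
          intro hmem
          rcases List.mem_cons.mp hmem with h | h
          · exact hki h
          · exact hk h)
    have hlow : ∀ k, k < i → τ k = 0 := by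
      intro k hk
      refine hsupp k ?_
      intro hmem
      rcases List.mem_cons.mp hmem with h | h
      · exact absurd h (ne_of_lt hk)
      · exact absurd (hilt k h) (not_lt.mpr hk.le)
    have hIH := ih hsort' σ hσα hσsupp
    -- notation
    set Fφ := fun y => f y * gaussDensity s y with hFφ
    set E := fun t : ℝ => Real.exp (-(t ^ 2 / 2)) with hE
    set Kx := (2 * Real.pi) ^ (-(s : ℝ) / 2) * ∏ k ∈ Finset.univ.erase i, E (x k) with hKx
    set P' := Fintype.piFinset fun k => Finset.range (σ k + 1) with hP'
    set coef := fun j' : Fin s → ℕ =>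
      (-1 : ℝ) ^ (∑ k, (σ k - j' k)) * (∏ k, ((σ k).choose (σ k - j' k) : ℝ)) *
        Real.sqrt (∏ k, ((σ k - j' k).factorial : ℝ)) *
        hermiteMulti (fun k => σ k - j' k) x with hcoef
    set U := fun (m : ℕ) (t : ℝ) => ∑ j' ∈ P',
      (Kx * coef j') * mDeriv (Function.update j' i m) f (Function.update x i t) with hU
    have hmemP' : ∀ j' ∈ P', (j' i = 0 ∧ (∀ k, k < i → j' k = 0) ∧ ∀ k, j' k ≤ σ k) := by
      intro j' hj'
      have hm := Fintype.mem_piFinset.mp hj'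
      refine ⟨?_, ?_, ?_⟩
      · have := hm i; rw [hσi] at this; simpa using this
      · intro k hk
        have := hm k
        rw [hσk k (ne_of_lt hk), hlow k hk] at this
        simpa using this
      · intro k
        have := Finset.mem_range.mp (hm k)
        omega
    -- gaussian factorization at update points
    have hgauss : ∀ t : ℝ, gaussDensity s (Function.update x i t) = Kx * E t := by
      intro t
      rw [gauss_factor]
      have h1 : ∀ k : Fin s, Real.exp (-(Function.update x i t k ^ 2 / 2))
          = Function.update (fun k => E (x k)) i (E t) k := by
        intro k
        exact Function.apply_update (fun _ y => Real.exp (-(y ^ 2 / 2))) x i t k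
      rw [Finset.prod_congr rfl fun k _ => h1 k, Finset.prod_update_of_mem (Finset.mem_univ i),
        ← Finset.erase_eq]
      rw [hKx]; ring
    have hgauss_x : gaussDensity s x = Kx * E (x i) := by
      have := hgauss (x i)
      rwa [Function.update_eq_self] at this
    -- step 1: split off coordinate i
    rw [mDeriv_split τ Fφ i hlow, ← hσ, pDeriv_iterate]
    -- step 2: identify inner function with U 0 * E
    have hinner : (fun t => mDeriv σ Fφ (Function.update x i t)) = fun t => U 0 t * E t := by
      funext t
      rw [hIH (Function.update x i t), hgauss t, hU]
      rw [Finset.mul_sum, Finset.sum_mul]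
      refine Finset.sum_congr rfl fun j' hj' => ?_
      obtain ⟨hj'i, _, _⟩ := hmemP' j' hj'
      have hH : hermiteMulti (fun k => σ k - j' k) (Function.update x i t)
          = hermiteMulti (fun k => σ k - j' k) x := by
        rw [hermiteMulti, hermiteMulti]
        refine Finset.prod_congr rfl fun k _ => ?_
        rcases eq_or_ne k i with rfl | hk
        · rw [hσi, hj'i, hermiteN_zero, hermiteN_zero]
        · rw [Function.update_of_ne hk]
      have hupd : Function.update j' i 0 = j' := update_zero_self j' i hj'i
      rw [hcoef]
      simp only [hupd, hH]
      ring
    rw [hinner]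
    -- step 3: Leibniz
    have hchainU : ∀ m, m < n → ∀ t, HasDerivAt (U m) (U (m+1) t) t := by
      intro m hm t
      refine HasDerivAt.fun_sum fun j' hj' => ?_
      obtain ⟨hj'i, hj'low, hj'le⟩ := hmemP' j' hj'
      exact (hasDerivAt_chain f hf i j' hj'low hj'i
        (fun k => le_trans (hj'le k) (hσα k)) x m (lt_of_lt_of_le hm (hτα i)) t).const_mul _
    have hchainV : ∀ m, m < n → ∀ t, HasDerivAt (deriv^[m] E)
        (deriv^[m+1] E t) t := fun m _ t => hasDerivAt_iterE m t
    have hLeib := leibniz_chain U (fun m => deriv^[m] E) n hchainU hchainV (x i)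
    have hE0 : (fun r => U 0 r * deriv^[0] E r) = fun r => U 0 r * E r := by
      simp
    rw [hE0] at hLeib
    rw [hLeib]
    -- step 4: reindex and match terms
    rw [Finset.mul_sum]
    have hexp : ∀ m ∈ Finset.range (n+1),
        (n.choose m : ℝ) * (U (n-m) (x i) * deriv^[m] E (x i))
        = ∑ j' ∈ P', (n.choose m : ℝ) * ((Kx * coef j') * mDeriv (Function.update j' i (n-m)) f x
            * ((-1:ℝ)^m * Polynomial.aeval (x i) (Polynomial.hermite m) * E (x i))) := by
      intro m _
      rw [hU]
      simp only [Function.update_eq_self]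
      rw [hE, Polynomial.deriv_gaussian_eq_hermite_mul_gaussian m (x i)]
      rw [Finset.sum_mul, Finset.mul_sum]
      try refine Finset.sum_congr rfl fun j' _ => ?_
      try ring
    rw [Finset.sum_congr rfl hexp]
    rw [← Finset.sum_product']
    refine Finset.sum_nbij' (fun p => Function.update p.2 i (n - p.1))
      (fun j => (τ i - j i, Function.update j i 0)) ?_ ?_ ?_ ?_ ?_
    · rintro ⟨m, j'⟩ hp
      dsimp only
      rw [Finset.mem_product] at hp
      obtain ⟨hm, hj'⟩ := hp
      rw [Finset.mem_range] at hm
      obtain ⟨hj'i, _, hj'le⟩ := hmemP' j' hj'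
      rw [Fintype.mem_piFinset]
      intro k
      rcases eq_or_ne k i with rfl | hk
      · rw [Function.update_self, Finset.mem_range]; omega
      · rw [Function.update_of_ne hk, Finset.mem_range]
        have := hj'le k
        rw [hσk k hk] at this
        omega
    · intro j hj
      have hm := Fintype.mem_piFinset.mp hj
      rw [Finset.mem_product]
      dsimp only
      constructor
      · rw [Finset.mem_range]; omega
      · rw [Fintype.mem_piFinset]
        intro k
        rcases eq_or_ne k i with rfl | hk
        · rw [Function.update_self, hσi, Finset.mem_range]; omega
        · rw [Function.update_of_ne hk, hσk k hk]
          exact hm k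
    · rintro ⟨m, j'⟩ hp
      dsimp only
      rw [Finset.mem_product] at hp
      obtain ⟨hm, hj'⟩ := hp
      rw [Finset.mem_range] at hm
      obtain ⟨hj'i, _, _⟩ := hmemP' j' hj'
      have h1 : Function.update j' i (n - m) i = n - m := Function.update_self _ _ _
      rw [Prod.mk.injEq]
      constructor
      · rw [h1, ← hn]; omega
      · rw [Function.update_idem]
        exact update_zero_self j' i hj'i
    · intro j hj
      dsimp only
      have hm := Fintype.mem_piFinset.mp hj
      have hji : j i ≤ n := by
        have := Finset.mem_range.mp (hm i)
        omega
      rw [Function.update_idem]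
      have : n - (τ i - j i) = j i := by omega
      rw [this, Function.update_eq_self]
    · -- the term equality
      rintro ⟨m, j'⟩ hp
      rw [Finset.mem_product] at hp
      obtain ⟨hmr, hj'⟩ := hp
      have hm : m ≤ n := by
        have := Finset.mem_range.mp hmr; omega
      obtain ⟨hj'i, _, hj'le⟩ := hmemP' j' hj'
      set j := Function.update j' i (n - m) with hj
      -- update identities
      have fupd : ∀ (β : Type) (G : Fin s → ℕ → ℕ → β),
          (fun k => G k (τ k) (j k)) = Function.update (fun k => G k (σ k) (j' k)) i (G i n (n-m)) := by
        intro β G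
        funext k
        rcases eq_or_ne k i with rfl | hk
        · rw [Function.update_self, hj, Function.update_self, ← hn]
        · rw [Function.update_of_ne hk, hj, Function.update_of_ne hk, hσk k hk]
      have hbase : ∀ (M : Type) [inst : CommMonoid M] (G : Fin s → M),
          ∏ k, G k = G i * ∏ k ∈ Finset.univ.erase i, G k :=
        fun M inst G => (Finset.mul_prod_erase _ _ (Finset.mem_univ i)).symm
      -- sum of exponents
      have s1 : ∑ k, (τ k - j k) = m + ∑ k, (σ k - j' k) := by
        have h1 := fupd ℕ (fun _ a b => a - b)
        rw [h1, Finset.sum_update_of_mem (Finset.mem_univ i), ← Finset.erase_eq]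
        have h2 : ∑ k, (σ k - j' k) = (σ i - j' i) + ∑ k ∈ Finset.univ.erase i, (σ k - j' k) :=
          (Finset.add_sum_erase _ _ (Finset.mem_univ i)).symm
        rw [h2, hσi, hj'i]
        omega
      -- product of binomials
      have p1 : (∏ k, ((τ k).choose (τ k - j k) : ℝ))
          = (n.choose m : ℝ) * ∏ k, ((σ k).choose (σ k - j' k) : ℝ) := by
        have h1 := fupd ℝ (fun _ a b => ((a.choose (a - b) : ℕ) : ℝ))
        rw [h1, Finset.prod_update_of_mem (Finset.mem_univ i), ← Finset.erase_eq]
        rw [hbase ℝ (fun k => ((σ k).choose (σ k - j' k) : ℝ))]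
        rw [hσi, hj'i]
        have : n - (n - m) = m := by omega
        rw [this]
        norm_num
      -- product of factorials
      have p2 : (∏ k, ((τ k - j k).factorial : ℝ))
          = (m.factorial : ℝ) * ∏ k, ((σ k - j' k).factorial : ℝ) := by
        have h1 := fupd ℝ (fun _ a b => (((a - b).factorial : ℕ) : ℝ))
        rw [h1, Finset.prod_update_of_mem (Finset.mem_univ i), ← Finset.erase_eq]
        rw [hbase ℝ (fun k => ((σ k - j' k).factorial : ℝ))]
        rw [hσi, hj'i]
        have : n - (n - m) = m := by omega
        rw [this]
        norm_num
      -- hermite product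
      have h1 : hermiteMulti (fun k => τ k - j k) x
          = hermiteN m (x i) * hermiteMulti (fun k => σ k - j' k) x := by
        rw [hermiteMulti, hermiteMulti]
        have hfe := fupd ℝ (fun k a b => hermiteN (a - b) (x k))
        rw [hfe, Finset.prod_update_of_mem (Finset.mem_univ i), ← Finset.erase_eq]
        rw [hbase ℝ (fun k => hermiteN (σ k - j' k) (x k))]
        rw [hσi, hj'i, hermiteN_zero, one_mul]
        have : n - (n - m) = m := by omega
        rw [this]
      -- sqrt split
      have sq1 : Real.sqrt (∏ k, ((τ k - j k).factorial : ℝ))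
          = Real.sqrt (m.factorial : ℝ) * Real.sqrt (∏ k, ((σ k - j' k).factorial : ℝ)) := by
        rw [p2, Real.sqrt_mul (by positivity)]
      -- assemble
      rw [s1, p1, sq1, h1, hgauss_x, hcoef]
      rw [pow_add]
      have haev : Real.sqrt (m.factorial : ℝ) * hermiteN m (x i)
          = Polynomial.aeval (x i) (Polynomial.hermite m) := sqrt_fact_mul_hermiteN m (x i)
      rw [← haev]
      ring


end Aux

/-- Product rule for `∂^τ(f·φ_s)`: for `τ ∈ {0,…,α}^s` and all `x`,
`∂^τ(f φ_s)(x) = φ_s(x) ∑_{j ≤ τ} (-1)^{|τ-j|} C(τ,τ-j) √((τ-j)!) H_{τ-j}(x) ∂^j f(x)`. -/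
theorem mixed_deriv_mul_gauss (s α : ℕ) (hs : 0 < s) (hα : 0 < α)
    (f : (Fin s → ℝ) → ℝ) (hf : HasContMixedPartials s α f)
    (τ : Fin s → ℕ) (hτ : ∀ i, τ i ≤ α) (x : Fin s → ℝ) :
    mDeriv τ (fun y => f y * gaussDensity s y) x =
      gaussDensity s x *
        ∑ j ∈ Fintype.piFinset fun i => Finset.range (τ i + 1),
          (-1 : ℝ) ^ (∑ i, (τ i - j i)) *
            (∏ i, ((τ i).choose (τ i - j i) : ℝ)) *
            Real.sqrt (∏ i, ((τ i - j i).factorial : ℝ)) *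
            hermiteMulti (fun i => τ i - j i) x * mDeriv j f x := by
  exact main_list f hf (List.finRange s) (List.pairwise_lt_finRange s) τ hτ
    (fun i hi => absurd (List.mem_finRange i) hi) x
end

section
/- Let α ∈ ℕ and let p denote the α-th derivative of the polynomial x ↦ (x − x²)^α. Then for all a, b ∈ ℝ, ∫_0^1 p(z) · p(bz + a) dz = (α!)² b^α / (2α + 1). -/
open MeasureTheory Real Filter

section AuxIBP
open Polynomial intervalIntegral


-- vanishing of low derivatives at 0 and 1
lemma vanish0 (α j : ℕ) (hj : j < α) :
    (Polynomial.derivative^[j] ((X - X ^ 2 : ℝ[X]) ^ α)).eval 0 = 0 := by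
  have hdvd : (X : ℝ[X]) ^ α ∣ (X - X ^ 2 : ℝ[X]) ^ α :=
    pow_dvd_pow_of_dvd ⟨1 - X, by ring⟩ α
  obtain ⟨r, hr⟩ := Polynomial.pow_sub_dvd_iterate_derivative_of_pow_dvd j hdvd
  rw [hr]
  simp [zero_pow (Nat.sub_ne_zero_of_lt hj)]

lemma vanish1 (α j : ℕ) (hj : j < α) :
    (Polynomial.derivative^[j] ((X - X ^ 2 : ℝ[X]) ^ α)).eval 1 = 0 := by
  have hdvd : ((X : ℝ[X]) - C 1) ^ α ∣ (X - X ^ 2 : ℝ[X]) ^ α :=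
    pow_dvd_pow_of_dvd ⟨-X, by rw [Polynomial.C_1]; ring⟩ α
  obtain ⟨r, hr⟩ := Polynomial.pow_sub_dvd_iterate_derivative_of_pow_dvd j hdvd
  rw [hr]
  simp [zero_pow (Nat.sub_ne_zero_of_lt hj)]

lemma beta_nat (α : ℕ) :
    ∫ x in (0:ℝ)..1, x ^ α * (1 - x) ^ α
      = (α.factorial : ℝ) ^ 2 / (2 * α + 1).factorial := by
  have hre : 0 < ((α : ℂ) + 1).re := by
    simp only [Complex.add_re, Complex.natCast_re, Complex.one_re]
    positivity
  have hB : Complex.betaIntegral ((α:ℂ)+1) ((α:ℂ)+1)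
      = ((∫ x in (0:ℝ)..1, x ^ α * (1 - x) ^ α : ℝ) : ℂ) := by
    rw [Complex.betaIntegral,
      intervalIntegral.integral_congr (g := fun x : ℝ => ((x ^ α * (1 - x) ^ α : ℝ) : ℂ))
        (fun x hx => by
          have : (α:ℂ) + 1 - 1 = ((α : ℕ) : ℂ) := by ring
          simp only [this, Complex.cpow_natCast]
          push_cast
          ring)]
    exact RCLike.intervalIntegral_ofReal
  have h := Complex.Gamma_mul_Gamma_eq_betaIntegral hre hre
  rw [hB, Complex.Gamma_nat_eq_factorial] at h
  have h2 : (α:ℂ) + 1 + ((α:ℂ) + 1) = ((2*α+1 : ℕ) : ℂ) + 1 := by push_cast; ring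
  rw [h2, Complex.Gamma_nat_eq_factorial] at h
  have hne : ((2*α+1).factorial : ℂ) ≠ 0 := by exact_mod_cast (2*α+1).factorial_ne_zero
  have : ((∫ x in (0:ℝ)..1, x ^ α * (1 - x) ^ α : ℝ) : ℂ)
      = ((α.factorial : ℝ) ^ 2 / ((2*α+1).factorial : ℝ) : ℝ) := by
    push_cast
    field_simp at h ⊢
    linear_combination -h
  exact_mod_cast this

lemma ibp_key (α : ℕ) (a b : ℝ) :
    ∀ k, k ≤ α →
    (∫ z in (0:ℝ)..1,
        (Polynomial.derivative^[α] ((X - X ^ 2 : ℝ[X]) ^ α)).eval z *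
          (Polynomial.derivative^[α] ((X - X ^ 2 : ℝ[X]) ^ α)).eval (b * z + a))
      = (-b) ^ k * ∫ z in (0:ℝ)..1,
          (Polynomial.derivative^[α - k] ((X - X ^ 2 : ℝ[X]) ^ α)).eval z *
            (Polynomial.derivative^[α + k] ((X - X ^ 2 : ℝ[X]) ^ α)).eval (b * z + a) := by
  intro k
  induction k with
  | zero => simp
  | succ k ih =>
    intro hk1
    have hk : k ≤ α := Nat.le_of_succ_le hk1
    rw [ih hk]
    set g : ℝ[X] := (X - X ^ 2 : ℝ[X]) ^ α with hg
    set u : ℝ[X] := Polynomial.derivative^[α - (k+1)] g with hu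
    set v : ℝ[X] := Polynomial.derivative^[α + k] g with hv
    have hdu : Polynomial.derivative^[α - k] g = Polynomial.derivative u := by
      have h' : α - k = (α - (k+1)) + 1 := by omega
      rw [hu, h', Function.iterate_succ_apply']
    have hdv : Polynomial.derivative^[α + (k+1)] g = Polynomial.derivative v :=
      Function.iterate_succ_apply' _ _ _
    -- the product rule derivative
    have hder : ∀ z : ℝ, HasDerivAt
        (fun z => u.eval z * v.eval (b * z + a))
        ((Polynomial.derivative u).eval z * v.eval (b * z + a)
          + u.eval z * (b * (Polynomial.derivative v).eval (b * z + a))) z := by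
      intro z
      have h1 : HasDerivAt (fun z : ℝ => u.eval z) ((Polynomial.derivative u).eval z) z :=
        u.hasDerivAt z
      have haff : HasDerivAt (fun z : ℝ => b * z + a) b z := by
        simpa using ((hasDerivAt_id z).const_mul b).add_const a
      have h2 : HasDerivAt (fun z : ℝ => v.eval (b * z + a))
          (b * (Polynomial.derivative v).eval (b * z + a)) z := by
        have := (v.hasDerivAt (b * z + a)).comp z haff
        exact this.congr_deriv (mul_comm _ _)
      exact h1.mul h2
    have hcontA : Continuous fun z : ℝ =>
        (Polynomial.derivative u).eval z * v.eval (b * z + a) :=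
      (Polynomial.continuous _).mul
        ((Polynomial.continuous v).comp (by continuity))
    have hcontB : Continuous fun z : ℝ =>
        u.eval z * (b * (Polynomial.derivative v).eval (b * z + a)) :=
      (Polynomial.continuous u).mul
        (continuous_const.mul ((Polynomial.continuous _).comp (by continuity)))
    have hFTC := intervalIntegral.integral_eq_sub_of_hasDerivAt
      (f := fun z => u.eval z * v.eval (b * z + a))
      (fun x _ => hder x)
      ((hcontA.add hcontB).intervalIntegrable 0 1)
    have hv0 : u.eval 0 = 0 := vanish0 α _ (by omega)
    have hv1 : u.eval 1 = 0 := vanish1 α _ (by omega)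
    simp only [hv0, hv1, zero_mul, sub_zero] at hFTC
    rw [intervalIntegral.integral_add (hcontA.intervalIntegrable 0 1)
      (hcontB.intervalIntegrable 0 1)] at hFTC
    have hsplit : (∫ z in (0:ℝ)..1,
        (Polynomial.derivative^[α - k] g).eval z *
          (Polynomial.derivative^[α + k] g).eval (b * z + a))
        = - ∫ z in (0:ℝ)..1,
            u.eval z * (b * (Polynomial.derivative v).eval (b * z + a)) := by
      rw [hdu]
      linarith [hFTC]
    rw [hsplit]
    have : (∫ z in (0:ℝ)..1,
        u.eval z * (b * (Polynomial.derivative v).eval (b * z + a)))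
        = b * ∫ z in (0:ℝ)..1, u.eval z * (Polynomial.derivative v).eval (b * z + a) := by
      rw [← intervalIntegral.integral_const_mul]
      refine intervalIntegral.integral_congr fun x hx => by ring
    rw [this, hdv]
    ring

lemma top_deriv (α : ℕ) :
    Polynomial.derivative^[2*α] ((X - X ^ 2 : ℝ[X]) ^ α)
      = C ((-1:ℝ)^α * (2*α).factorial) := by
  set g : ℝ[X] := (X - X ^ 2 : ℝ[X]) ^ α with hg
  have hd2 : (X - X ^ 2 : ℝ[X]).natDegree = 2 := by compute_degree!
  have hdg : g.natDegree = 2 * α := by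
    rw [hg, Polynomial.natDegree_pow, hd2, mul_comm]
  have hlc : g.coeff (2*α) = (-1:ℝ)^α := by
    have : g.coeff (2*α) = g.leadingCoeff := by rw [Polynomial.leadingCoeff, hdg]
    rw [this, hg, Polynomial.leadingCoeff_pow]
    have : (X - X ^ 2 : ℝ[X]).leadingCoeff = -1 := by
      rw [Polynomial.leadingCoeff, hd2]
      simp [Polynomial.coeff_X]
    rw [this]
  have hle : (Polynomial.derivative^[2*α] g).natDegree ≤ 0 := by
    have := Polynomial.natDegree_iterate_derivative g (2*α)
    omega
  rw [Polynomial.eq_C_of_natDegree_le_zero hle,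
    Polynomial.coeff_iterate_derivative, zero_add, hlc, Nat.descFactorial_self]
  rw [nsmul_eq_mul]
  ring_nf


end AuxIBP

open Polynomial in
/-- With `p` the `α`-th derivative of the polynomial `x ↦ (x - x²)^α`,
for all `a, b ∈ ℝ`: `∫₀¹ p(z) p(bz + a) dz = (α!)² b^α / (2α + 1)`. -/
theorem integral_deriv_poly_mul (α : ℕ) (hα : 0 < α) (a b : ℝ) :
    ∫ z in (0 : ℝ)..1,
        (Polynomial.derivative^[α] ((X - X ^ 2 : ℝ[X]) ^ α)).eval z *
          (Polynomial.derivative^[α] ((X - X ^ 2 : ℝ[X]) ^ α)).eval (b * z + a) =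
      (α.factorial : ℝ) ^ 2 * b ^ α / (2 * α + 1) := by
  rw [ibp_key α a b α le_rfl]
  have h2 : α + α = 2 * α := by ring
  rw [Nat.sub_self, h2, top_deriv α]
  simp only [Function.iterate_zero_apply, Polynomial.eval_C]
  have hcongr : (∫ z in (0:ℝ)..1,
      ((X - X ^ 2 : ℝ[X]) ^ α).eval z * ((-1:ℝ)^α * (2*α).factorial))
      = ((-1:ℝ)^α * (2*α).factorial) * ∫ z in (0:ℝ)..1, z ^ α * (1 - z) ^ α := by
    rw [← intervalIntegral.integral_const_mul]
    refine intervalIntegral.integral_congr fun z hz => ?_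
    have : ((X - X ^ 2 : ℝ[X]) ^ α).eval z = z ^ α * (1 - z) ^ α := by
      simp only [Polynomial.eval_pow, Polynomial.eval_sub, Polynomial.eval_X]
      rw [← mul_pow]
      ring_nf
    rw [this]; ring
  rw [hcongr, beta_nat α]
  have hfact : ((2*α+1).factorial : ℝ) = (2*α+1) * (2*α).factorial := by
    rw [Nat.factorial_succ]; push_cast; ring
  have hne1 : ((2*α).factorial : ℝ) ≠ 0 := by exact_mod_cast (2*α).factorial_ne_zero
  have hne2 : (2*(α:ℝ)+1) ≠ 0 := by positivity
  rw [hfact]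

  field_simp
  ring_nf
  rw [show ((-1:ℝ)) ^ (α * 2) = 1 from Even.neg_one_pow ⟨α, by ring⟩]
  ring
end

section
/- Let α ∈ ℕ and c ∈ ℕ_0 with c ≤ α. Then ∑_{k=0}^{α} (−1)^k C(α,k) C(α+k,k) / (k + c + 1) equals 0 if c < α, and equals (−1)^α (α!)² / ((2α)! (2α+1)) if c = α, where C(n,k) denotes the binomial coefficient. -/
open MeasureTheory Real Filter

open Finset in
private lemma vand' (a k n : ℕ) (hk : k ≤ n) :
    (a + k).choose k = ∑ j ∈ Finset.range (n+1), a.choose j * k.choose j := by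
  rw [Nat.add_choose_eq, Finset.Nat.sum_antidiagonal_eq_sum_range_succ_mk]
  simp only
  have h1 : ∑ i ∈ range (k+1), a.choose i * k.choose (k - i)
      = ∑ i ∈ range (k+1), a.choose i * k.choose i := by
    apply Finset.sum_congr rfl
    intro i hi
    simp only [Finset.mem_range] at hi
    rw [Nat.choose_symm (by omega : i ≤ k)]
  rw [h1]
  apply Finset.sum_subset (Finset.range_subset_range.2 (Nat.succ_le_succ hk))
  intro i _ hi
  simp only [Finset.mem_range, not_lt] at hi
  simp [Nat.choose_eq_zero_of_lt (show k < i by omega)]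

open Finset in
private lemma sum_shift' (n i : ℕ) (hi : i ≤ n) (f : ℕ → ℝ) (hf : ∀ j < i, f j = 0) :
    ∑ j ∈ range (n+1), f j = ∑ m ∈ range (n-i+1), f (i+m) := by
  rw [Finset.range_eq_Ico, ← Finset.sum_Ico_consecutive _ (Nat.zero_le i) (by omega)]
  have h0 : ∑ j ∈ Finset.Ico 0 i, f j = 0 := by
    apply Finset.sum_eq_zero; intro j hj; exact hf j (Finset.mem_Ico.1 hj).2
  rw [h0, zero_add, Finset.sum_Ico_eq_sum_range]
  have : n + 1 - i = n - i + 1 := by omega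
  rw [this]

open Finset in
private lemma alt_sum' (N : ℕ) :
    ∑ m ∈ range (N+1), (-1:ℝ)^m * N.choose m = if N = 0 then 1 else 0 := by
  have h2 := congrArg (fun z : ℤ => (z : ℝ)) (@Int.alternating_sum_range_choose N)
  push_cast at h2
  simpa using h2

open Finset in
private lemma inner_sum1' (n i : ℕ) (hi : i ≤ n) (g : ℕ → ℝ) :
    ∑ j ∈ range (n+1), (-1:ℝ)^j * n.choose j * j.choose i * g j
    = (-1:ℝ)^i * n.choose i *
        ∑ m ∈ range (n-i+1), (-1:ℝ)^m * ((n-i).choose m) * g (i+m) := by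
  rw [sum_shift' n i hi _ (by
    intro j hj
    rw [Nat.choose_eq_zero_of_lt hj]
    push_cast; ring)]
  rw [Finset.mul_sum]
  apply Finset.sum_congr rfl
  intro m hm
  simp only [Finset.mem_range] at hm
  have hmn : i + m ≤ n := by omega
  have hcm : n.choose (i+m) * (i+m).choose i = n.choose i * (n-i).choose m := by
    have := Nat.choose_mul (n := n) (Nat.le_add_right i m)
    simpa using this
  have hc : (n.choose (i+m) : ℝ) * (i+m).choose i = (n.choose i : ℝ) * (n-i).choose m := by
    exact_mod_cast congrArg (Nat.cast : ℕ → ℝ) hcm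
  rw [pow_add]
  calc (-1:ℝ)^i * (-1)^m * (n.choose (i+m)) * ((i+m).choose i) * g (i+m)
      = ((n.choose (i+m):ℝ) * ((i+m).choose i)) * ((-1)^i * (-1)^m * g (i+m)) := by ring
    _ = ((n.choose i : ℝ) * ((n-i).choose m)) * ((-1)^i * (-1)^m * g (i+m)) := by rw [hc]
    _ = (-1:ℝ)^i * n.choose i * ((-1)^m * ((n-i).choose m) * g (i+m)) := by ring

open Finset in
private lemma lem1' : ∀ M x : ℕ,
    ∑ m ∈ range (M+1), (-1:ℝ)^m * M.choose m / ((m:ℝ) + x + 1)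
      = (M.factorial : ℝ) * x.factorial / ((M + x + 1).factorial) := by
  intro M
  induction M with
  | zero =>
    intro x
    have hx : ((x:ℝ) + 1) ≠ 0 := by positivity
    have hxf : (x.factorial : ℝ) ≠ 0 := by exact_mod_cast x.factorial_ne_zero
    simp only [zero_add, Finset.sum_range_one, pow_zero, Nat.choose_self, Nat.cast_one,
      Nat.factorial_one, Nat.factorial_succ]
    push_cast
    field_simp
    simp
  | succ M ih =>
    intro x
    set g : ℕ → ℝ := fun m => (-1:ℝ)^m * M.choose m / ((m:ℝ) + x + 1) with hg
    have hT2 : ∑ m ∈ range (M+1), (-1:ℝ)^m * (M.choose (m+1)) / ((m:ℝ) + x + 2)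
        = 1/((x:ℝ)+1) - (M.factorial : ℝ) * x.factorial / ((M + x + 1).factorial) := by
      have h := Finset.sum_range_succ' g (M+1)
      have hlast := Finset.sum_range_succ g (M+1)
      have hzero : g (M+1) = 0 := by
        simp [hg, Nat.choose_eq_zero_of_lt (Nat.lt_succ_self M)]
      have hg0 : g 0 = 1/((x:ℝ)+1) := by simp [hg]
      have hshift : ∑ m ∈ range (M+1), g (m+1)
          = (M.factorial : ℝ) * x.factorial / ((M + x + 1).factorial) - 1/((x:ℝ)+1) := by
        rw [hlast, hzero, add_zero, ih x, hg0] at h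
        linarith
      have heq : ∑ m ∈ range (M+1), (-1:ℝ)^m * (M.choose (m+1)) / ((m:ℝ) + x + 2)
          = - ∑ m ∈ range (M+1), g (m+1) := by
        rw [← Finset.sum_neg_distrib]
        apply Finset.sum_congr rfl
        intro m _
        simp only [hg]
        push_cast
        rw [pow_succ]
        ring
      rw [heq, hshift]
      ring
    have hterm : ∀ m : ℕ, (-1:ℝ)^(m+1) * (((M+1).choose (m+1)):ℝ) / (((m+1:ℕ):ℝ) + x + 1)
        = -((-1:ℝ)^m * (M.choose m) / ((m:ℝ) + ((x+1:ℕ):ℝ) + 1))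
          - (-1:ℝ)^m * (M.choose (m+1)) / ((m:ℝ) + x + 2) := by
      intro m
      rw [Nat.choose_succ_succ]
      push_cast
      have hne : (m:ℝ) + x + 2 ≠ 0 := by positivity
      rw [pow_succ]
      field_simp
      ring
    rw [Finset.sum_range_succ' (fun m => (-1:ℝ)^m * ((M+1).choose m) / ((m:ℝ) + x + 1)) (M+1)]
    simp only [hterm]
    rw [Finset.sum_sub_distrib, Finset.sum_neg_distrib, ih (x+1), hT2]
    have e1 : M + (x+1) + 1 = M + x + 1 + 1 := by omega
    have e2 : M + 1 + x + 1 = M + x + 1 + 1 := by omega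
    rw [e1, e2, Nat.factorial_succ (M+x+1), Nat.factorial_succ x, Nat.factorial_succ M]
    have hA : ((M+x+1).factorial : ℝ) ≠ 0 := by exact_mod_cast (M+x+1).factorial_ne_zero
    have hx : ((x:ℝ) + 1) ≠ 0 := by positivity
    simp only [Nat.choose_zero_right, Nat.cast_one, pow_zero, Nat.cast_zero]
    push_cast
    field_simp
    ring

open Finset in
private lemma lem2' (n c : ℕ) :
    ∑ j ∈ range (n+1), (-1:ℝ)^j * n.choose j * ((c+j).choose j)
      = (-1:ℝ)^n * c.choose n := by
  have step1 : ∑ j ∈ range (n+1), (-1:ℝ)^j * n.choose j * ((c+j).choose j)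
      = ∑ j ∈ range (n+1), ∑ i ∈ range (n+1),
          (c.choose i : ℝ) * ((-1:ℝ)^j * n.choose j * j.choose i) := by
    apply Finset.sum_congr rfl
    intro j hj
    simp only [Finset.mem_range] at hj
    rw [vand' c j n (by omega)]
    push_cast
    rw [Finset.mul_sum]
    apply Finset.sum_congr rfl
    intro i _
    ring
  rw [step1, Finset.sum_comm]
  have step2 : ∀ i ∈ range (n+1),
      ∑ j ∈ range (n+1), (c.choose i : ℝ) * ((-1:ℝ)^j * n.choose j * j.choose i)
      = (c.choose i : ℝ) * ((-1:ℝ)^i * n.choose i * (if n - i = 0 then 1 else 0)) := by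
    intro i hi
    simp only [Finset.mem_range] at hi
    rw [← Finset.mul_sum]
    congr 1
    have h := inner_sum1' n i (by omega) (fun _ => 1)
    simp only [mul_one] at h
    rw [h, alt_sum' (n-i)]
  rw [Finset.sum_congr rfl step2]
  rw [Finset.sum_eq_single n]
  · simp; ring
  · intro b hb hbn
    simp only [Finset.mem_range] at hb
    rw [if_neg (by omega)]
    ring
  · intro h
    simp at h

private lemma natid' (α c j : ℕ) (hj : j ≤ α) :
    α.choose j * α.choose j * (α-j).factorial * (j+c).factorial
      = α.factorial * c.factorial * (α.choose j * (c+j).choose j) := by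
  have f1 := Nat.choose_mul_factorial_mul_factorial hj
  have f2 := Nat.choose_mul_factorial_mul_factorial (Nat.le_add_left j c)
  rw [Nat.add_sub_cancel] at f2
  rw [show j + c = c + j from Nat.add_comm j c, ← f2, ← f1]
  ring

open Finset in
/-- For `α ∈ ℕ` and `c ≤ α`,
`∑_{k=0}^α (-1)^k C(α,k) C(α+k,k)/(k+c+1)` equals `0` if `c < α` and
`(-1)^α (α!)²/((2α)!(2α+1))` if `c = α`. -/
theorem alternating_binomial_sum (α : ℕ) (hα : 0 < α) (c : ℕ) (hc : c ≤ α) :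
    ∑ k ∈ Finset.range (α + 1),
        (-1 : ℝ) ^ k * (α.choose k : ℝ) * ((α + k).choose k : ℝ) / ((k : ℝ) + c + 1) =
      if c < α then 0
      else (-1 : ℝ) ^ α * (α.factorial : ℝ) ^ 2 /
        (((2 * α).factorial : ℝ) * (2 * (α : ℝ) + 1)) := by
  have hstep : ∀ k ∈ range (α+1),
      (-1:ℝ)^k * (α.choose k : ℝ) * ((α+k).choose k : ℝ) / ((k:ℝ)+c+1)
      = ∑ j ∈ range (α+1),
          (α.choose j : ℝ) * ((-1:ℝ)^k * α.choose k * k.choose j * (1/((k:ℝ)+c+1))) := by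
    intro k hk
    simp only [Finset.mem_range] at hk
    rw [vand' α k α (by omega)]
    push_cast
    rw [Finset.mul_sum, Finset.sum_div]
    apply Finset.sum_congr rfl
    intro j _
    ring
  rw [Finset.sum_congr rfl hstep, Finset.sum_comm]
  have hD : (((α+c+1).factorial : ℕ) : ℝ) ≠ 0 := by exact_mod_cast (α+c+1).factorial_ne_zero
  have key : ∀ j ∈ range (α+1),
      ∑ k ∈ range (α+1),
          (α.choose j : ℝ) * ((-1:ℝ)^k * α.choose k * k.choose j * (1/((k:ℝ)+c+1)))
      = ((α.factorial : ℝ) * c.factorial / ((α+c+1).factorial))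
          * ((-1:ℝ)^j * α.choose j * ((c+j).choose j)) := by
    intro j hj
    simp only [Finset.mem_range] at hj
    rw [← Finset.mul_sum, inner_sum1' α j (by omega) (fun k => 1/((k:ℝ)+c+1))]
    have hin : ∑ m ∈ range (α-j+1),
        (-1:ℝ)^m * ((α-j).choose m) * (1/(((j+m:ℕ):ℝ)+c+1))
        = ((α-j).factorial : ℝ) * ((j+c).factorial) / (((α-j)+(j+c)+1).factorial) := by
      rw [← lem1' (α-j) (j+c)]
      apply Finset.sum_congr rfl
      intro m _
      push_cast
      ring
    rw [hin, show (α-j)+(j+c)+1 = α+c+1 by omega]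
    have hnat : (α.choose j : ℝ) * (α.choose j) * ((α-j).factorial) * ((j+c).factorial)
        = (α.factorial : ℝ) * c.factorial * ((α.choose j) * ((c+j).choose j)) := by
      exact_mod_cast congrArg (Nat.cast : ℕ → ℝ) (natid' α c j (by omega))
    calc (α.choose j : ℝ) * ((-1:ℝ)^j * (α.choose j) *
            (((α-j).factorial : ℝ) * ((j+c).factorial) / ((α+c+1).factorial)))
        = ((α.choose j : ℝ) * (α.choose j) * ((α-j).factorial) * ((j+c).factorial))
            * ((-1:ℝ)^j) / ((α+c+1).factorial) := by ring
      _ = ((α.factorial : ℝ) * c.factorial * ((α.choose j) * ((c+j).choose j)))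
            * ((-1:ℝ)^j) / ((α+c+1).factorial) := by rw [hnat]
      _ = ((α.factorial : ℝ) * c.factorial / ((α+c+1).factorial))
            * ((-1:ℝ)^j * α.choose j * ((c+j).choose j)) := by ring
  rw [Finset.sum_congr rfl key, ← Finset.mul_sum, lem2' α c]
  by_cases hlt : c < α
  · rw [if_pos hlt, Nat.choose_eq_zero_of_lt hlt]
    simp
  · rw [if_neg hlt]
    have hce : c = α := by omega
    subst hce
    rw [Nat.choose_self]
    have e1 : c + c + 1 = 2*c + 1 := by omega
    rw [e1, Nat.factorial_succ (2*c)]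
    have h2 : ((2*c).factorial : ℝ) ≠ 0 := by exact_mod_cast (2*c).factorial_ne_zero
    have h3 : (2*(c:ℝ)+1) ≠ 0 := by positivity
    push_cast
    field_simp
end

section
/- Let α ∈ ℕ, m ∈ ℕ_0 and i ∈ {1,…,2^m}, and define h_{i,m} : ℝ → ℝ by h_{i,m}(x) = (2^m x − (i−1))^α (i − 2^m x)^α for (i−1)/2^m < x < i/2^m and h_{i,m}(x) = 0 otherwise. Then ∫_{−∞}^{∞} h_{i,m}(x) φ(x) dx ≥ 2^{−m} · (α!)² / (2α+1)! · (2πe)^{−1/2}. -/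
open MeasureTheory Real Filter

lemma beta_nat_real (a : ℕ) :
    ∫ x in (0:ℝ)..1, x ^ a * (1 - x) ^ a = (a.factorial : ℝ) ^ 2 / ((2 * a + 1).factorial : ℝ) := by
  have hs : 0 < Complex.re ((a : ℂ) + 1) := by simp; positivity
  have h := Complex.Gamma_mul_Gamma_eq_betaIntegral hs hs
  have h1 : Complex.Gamma ((a : ℂ) + 1) = (a.factorial : ℂ) := Complex.Gamma_nat_eq_factorial a
  have h2 : Complex.Gamma (((a : ℂ) + 1) + ((a : ℂ) + 1)) = ((2 * a + 1).factorial : ℂ) := by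
    have : ((a : ℂ) + 1) + ((a : ℂ) + 1) = ((2 * a + 1 : ℕ) : ℂ) + 1 := by push_cast; ring
    rw [this, Complex.Gamma_nat_eq_factorial]
  have hbeta : Complex.betaIntegral ((a : ℂ) + 1) ((a : ℂ) + 1) =
      ((∫ x in (0:ℝ)..1, x ^ a * (1 - x) ^ a : ℝ) : ℂ) := by
    rw [Complex.betaIntegral]
    rw [← intervalIntegral.integral_ofReal]
    apply intervalIntegral.integral_congr
    intro x hx
    simp only [add_sub_cancel_right]
    rw [Complex.cpow_natCast, Complex.cpow_natCast]
    push_cast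
    ring
  rw [h1, h2, hbeta] at h
  have hne : ((2 * a + 1).factorial : ℂ) ≠ 0 := by
    exact_mod_cast Nat.cast_ne_zero.mpr (2 * a + 1).factorial_ne_zero
  have : ((∫ x in (0:ℝ)..1, x ^ a * (1 - x) ^ a : ℝ) : ℂ) =
      ((a.factorial : ℝ) ^ 2 / ((2 * a + 1).factorial : ℝ) : ℝ) := by
    push_cast
    field_simp at h ⊢
    linear_combination -h
  exact_mod_cast this

/-- For `α ∈ ℕ`, `m ∈ ℕ₀`, `1 ≤ i ≤ 2^m` and
`h_{i,m}(x) = (2^m x - (i-1))^α (i - 2^m x)^α` on `((i-1)/2^m, i/2^m)` (and `0` otherwise),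
`∫_ℝ h_{i,m}(x) φ(x) dx ≥ 2^{-m} (α!)²/(2α+1)! · (2πe)^{-1/2}`. -/
theorem integral_bump_gauss_lower (α : ℕ) (hα : 0 < α) (m i : ℕ)
    (hi1 : 1 ≤ i) (hi2 : i ≤ 2 ^ m) :
    (1 / 2 ^ m : ℝ) * ((α.factorial : ℝ) ^ 2 / ((2 * α + 1).factorial : ℝ)) *
        (Real.sqrt (2 * π * Real.exp 1))⁻¹ ≤
      ∫ x : ℝ,
        (if ((i : ℝ) - 1) / 2 ^ m < x ∧ x < (i : ℝ) / 2 ^ m then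
            (2 ^ m * x - ((i : ℝ) - 1)) ^ α * ((i : ℝ) - 2 ^ m * x) ^ α
          else 0) * (Real.exp (-x ^ 2 / 2) / Real.sqrt (2 * π)) := by
  have h2m : (0:ℝ) < 2 ^ m := by positivity
  have hi2' : (i : ℝ) ≤ 2 ^ m := by exact_mod_cast hi2
  have hi1' : (1 : ℝ) ≤ i := by exact_mod_cast hi1
  set a : ℝ := ((i : ℝ) - 1) / 2 ^ m with ha_def
  set b : ℝ := (i : ℝ) / 2 ^ m with hb_def
  set F : ℝ → ℝ := fun x => (2 ^ m * x - ((i : ℝ) - 1)) ^ α * ((i : ℝ) - 2 ^ m * x) ^ α with hF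
  set G : ℝ → ℝ := fun x => Real.exp (-x ^ 2 / 2) / Real.sqrt (2 * π) with hG
  set c : ℝ := (Real.sqrt (2 * π * Real.exp 1))⁻¹ with hc_def
  have hab : a < b := by rw [ha_def, hb_def, div_lt_div_iff₀ h2m h2m]; nlinarith
  have ha0 : 0 ≤ a := div_nonneg (by linarith) h2m.le
  have hb1 : b ≤ 1 := by rw [hb_def, div_le_one h2m]; exact hi2'
  -- rewrite integral as set integral over Ioo a b
  have hrw : (∫ x : ℝ,
        (if a < x ∧ x < b then (2 ^ m * x - ((i : ℝ) - 1)) ^ α * ((i : ℝ) - 2 ^ m * x) ^ α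
          else 0) * G x) = ∫ x in Set.Ioo a b, F x * G x := by
    rw [← integral_indicator measurableSet_Ioo]
    congr 1
    ext x
    by_cases hx : x ∈ Set.Ioo a b
    · rw [Set.indicator_of_mem hx]
      simp [Set.mem_Ioo] at hx
      simp [hx.1, hx.2, hF]
    · rw [Set.indicator_of_notMem hx]
      simp [Set.mem_Ioo] at hx
      rw [if_neg]
      · ring
      · intro h; exact absurd (hx h.1) (not_le.mpr h.2)
  rw [hrw]
  -- continuity and integrability
  have hFcont : Continuous F := by fun_prop
  have hGcont : Continuous G := by
    apply Continuous.div_const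
    fun_prop
  have hint1 : IntegrableOn (fun x => F x * c) (Set.Ioo a b) := by
    exact ((hFcont.mul continuous_const).integrableOn_Icc).mono_set Set.Ioo_subset_Icc_self
  have hint2 : IntegrableOn (fun x => F x * G x) (Set.Ioo a b) := by
    exact ((hFcont.mul hGcont).integrableOn_Icc).mono_set Set.Ioo_subset_Icc_self
  -- pointwise bound
  have hπ : (0:ℝ) < Real.sqrt (2 * π) := Real.sqrt_pos.mpr (by positivity)
  have hbound : ∀ x ∈ Set.Ioo a b, F x * c ≤ F x * G x := by
    intro x hx
    obtain ⟨hx1, hx2⟩ := hx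
    have hF0 : 0 ≤ F x := by
      apply mul_nonneg
      · apply pow_nonneg
        rw [ha_def, div_lt_iff₀ h2m] at hx1; linarith [hx1]
      · apply pow_nonneg
        rw [hb_def, lt_div_iff₀ h2m] at hx2; linarith [hx2]
    apply mul_le_mul_of_nonneg_left _ hF0
    have hx0 : 0 ≤ x := le_trans ha0 hx1.le
    have hxb : x ≤ 1 := le_trans hx2.le hb1
    have hx2le : x ^ 2 ≤ 1 := by nlinarith
    have : Real.exp (-(1:ℝ)/2) ≤ Real.exp (-x ^ 2 / 2) := by
      apply Real.exp_le_exp.mpr; linarith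
    have hcval : c = Real.exp (-(1:ℝ)/2) / Real.sqrt (2 * π) := by
      rw [hc_def, Real.sqrt_mul (by positivity : (0:ℝ) ≤ 2 * π), ← Real.exp_half, mul_inv,
        ← Real.exp_neg, div_eq_mul_inv, mul_comm]
      norm_num
      ring
    calc c = Real.exp (-(1:ℝ)/2) / Real.sqrt (2 * π) := hcval
      _ ≤ G x := by
            show _ ≤ Real.exp (-x ^ 2 / 2) / Real.sqrt (2 * π)
            gcongr
  have hmono := setIntegral_mono_on hint1 hint2 measurableSet_Ioo hbound
  refine le_trans (le_of_eq ?_) hmono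
  -- compute ∫ F * c over Ioo
  rw [integral_mul_const]
  have hIoo : (∫ x in Set.Ioo a b, F x) = ∫ x in a..b, F x := by
    rw [intervalIntegral.integral_of_le hab.le, integral_Ioc_eq_integral_Ioo]
  have hsub : (∫ x in a..b, F x) = (1 / 2 ^ m : ℝ) *
      ((α.factorial : ℝ) ^ 2 / ((2 * α + 1).factorial : ℝ)) := by
    have key : ∀ x : ℝ, F x = (fun u : ℝ => u ^ α * (1 - u) ^ α) (2 ^ m * x + (-(i - 1) : ℝ)) := by
      intro x; simp only [hF]; ring_nf
    calc (∫ x in a..b, F x)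
        = ∫ x in a..b, (fun u : ℝ => u ^ α * (1 - u) ^ α) (2 ^ m * x + (-(i - 1) : ℝ)) := by
          apply intervalIntegral.integral_congr; intro x _; exact key x
      _ = (2 ^ m : ℝ)⁻¹ • ∫ u in (2 ^ m * a + (-(i - 1) : ℝ))..(2 ^ m * b + (-(i - 1) : ℝ)),
            u ^ α * (1 - u) ^ α :=
          intervalIntegral.integral_comp_mul_add (fun u : ℝ => u ^ α * (1 - u) ^ α)
            (ne_of_gt h2m) _
      _ = (1 / 2 ^ m : ℝ) * ((α.factorial : ℝ) ^ 2 / ((2 * α + 1).factorial : ℝ)) := by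
          have e1 : 2 ^ m * a + (-(i - 1) : ℝ) = 0 := by
            rw [ha_def]; field_simp; ring
          have e2 : 2 ^ m * b + (-(i - 1) : ℝ) = 1 := by
            rw [hb_def]; field_simp; ring
          rw [e1, e2, beta_nat_real α, smul_eq_mul, one_div]
  rw [hIoo, hsub]
end
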